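/- arXiv:2207.00044 — 3 statements merged into one kernel-verified Lean document; each statement's English description precedes it below -/
import Mathlib

section
/- Let N be a positive integer and q ∈ ℂ with |q| < 1. Let z, c ∈ ℂ with z·q^k ≠ 1 and c·q^k ≠ 1 for 1 ≤ k ≤ N. Then ∑_{n=1}^{N} [N choose n]_q · (q;q)_n (zc)^n q^{n^2} / ((zq;q)_n (cq;q)_n) = z · ∑_{n=1}^{N} [N choose n]_q · (q;q)_n (cq;q)_{N−n} (cq)^n / ((zq;q)_n (cq;q)_N). -/
open Finset

/-- Finite q-Pochhammer symbol `(a;q)_n = ∏_{k=0}^{n-1} (1 - a q^k)`. -/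
noncomputable def qPoch (q a : ℂ) (n : ℕ) : ℂ :=
  ∏ k ∈ Finset.range n, (1 - a * q ^ k)

/-- Infinite q-Pochhammer symbol `(a;q)_∞ = ∏_{k=0}^{∞} (1 - a q^k)`. -/
noncomputable def qPochInf (q a : ℂ) : ℂ :=
  ∏' k : ℕ, (1 - a * q ^ k)

/-- Gaussian (q-binomial) coefficient `[N choose n]_q`. -/
noncomputable def qBinom (q : ℂ) (N n : ℕ) : ℂ :=
  qPoch q q N / (qPoch q q n * qPoch q q (N - n))

/-- triangular numbers: c2 n = C(n,2) -/
def c2 : ℕ → ℕ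
  | 0 => 0
  | n + 1 => c2 n + n

lemma c2_succ (n : ℕ) : c2 (n + 1) = c2 n + n := rfl

lemma c2_add (a b : ℕ) : c2 (a + b) = c2 a + c2 b + a * b := by
  induction b with
  | zero => simp [c2]
  | succ b ih =>
      have : a + (b + 1) = (a + b) + 1 := by ring
      rw [this, c2_succ, ih, c2_succ, Nat.mul_add, Nat.mul_one]
      ring

lemma two_c2 (n : ℕ) : 2 * c2 n + n = n ^ 2 := by
  induction n with
  | zero => simp [c2]
  | succ n ih => rw [c2_succ]; nlinarith [ih]

-- qPoch basics
lemma qPoch_zero (q a : ℂ) : qPoch q a 0 = 1 := by simp [qPoch]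

lemma qPoch_succ (q a : ℂ) (n : ℕ) :
    qPoch q a (n + 1) = qPoch q a n * (1 - a * q ^ n) := by
  simp [qPoch, Finset.prod_range_succ]

lemma qPoch_succ' (q a : ℂ) (n : ℕ) :
    qPoch q a (n + 1) = (1 - a) * qPoch q (a * q) n := by
  rw [qPoch, Finset.prod_range_succ' (fun k => 1 - a * q ^ k) n]
  simp only [pow_zero, mul_one]
  rw [mul_comm, qPoch]
  congr 1
  apply Finset.prod_congr rfl
  intro k _
  rw [pow_succ']
  ring

lemma qPoch_add (q a : ℂ) (m n : ℕ) :
    qPoch q a (m + n) = qPoch q a m * qPoch q (a * q ^ m) n := by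
  rw [qPoch, Finset.prod_range_add]
  congr 1
  apply Finset.prod_congr rfl
  intro k _
  rw [pow_add]
  ring
-- nonvanishing lemmas
section NZ
variable {q : ℂ} (hq : ‖q‖ < 1)

lemma one_sub_pow_ne (hq : ‖q‖ < 1) (k : ℕ) (hk : 1 ≤ k) : (1 : ℂ) - q ^ k ≠ 0 := by
  intro h
  have h1 : q ^ k = 1 := by linear_combination -h
  have : ‖q ^ k‖ < 1 := by
    rw [norm_pow]
    calc ‖q‖ ^ k ≤ ‖q‖ ^ 1 :=
          pow_le_pow_of_le_one (norm_nonneg q) hq.le hk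
      _ < 1 := by simpa using hq
  rw [h1] at this
  simp at this

lemma qPoch_q_ne_zero (hq : ‖q‖ < 1) (n : ℕ) : qPoch q q n ≠ 0 := by
  rw [qPoch]
  apply Finset.prod_ne_zero_iff.2
  intro k _
  have := one_sub_pow_ne hq (k + 1) (by omega)
  rw [pow_succ'] at this
  exact this

lemma qPoch_ne_zero_of_ne_one {z : ℂ} {n : ℕ} (h : ∀ k, 1 ≤ k → k ≤ n → z * q ^ k ≠ 1) :
    qPoch q (z * q) n ≠ 0 := by
  rw [qPoch]
  apply Finset.prod_ne_zero_iff.2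
  intro k hk
  have hk' : k + 1 ≤ n := Finset.mem_range.1 hk
  have := h (k + 1) (by omega) hk'
  intro h0
  apply this
  have : z * q ^ (k+1) - 1 = 0 := by rw [pow_succ']; linear_combination -h0
  linear_combination this

lemma one_sub_zq_ne {z : ℂ} {n k : ℕ} (h : ∀ j, 1 ≤ j → j ≤ n → z * q ^ j ≠ 1)
    (h1 : 1 ≤ k) (h2 : k ≤ n) : 1 - z * q ^ k ≠ 0 := by
  intro h0
  exact h k h1 h2 (by linear_combination -h0)

end NZ

/-- q-binomial extended by 0 outside range -/
noncomputable def Bb (q : ℂ) (j n : ℕ) : ℂ := if n ≤ j then qBinom q j n else 0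

lemma Bb_self (q : ℂ) (j : ℕ) (hq : ‖q‖ < 1) : Bb q j j = 1 := by
  rw [Bb, if_pos le_rfl, qBinom]
  rw [Nat.sub_self, qPoch_zero, mul_one, div_self (qPoch_q_ne_zero hq j)]

lemma Bb_zero (q : ℂ) (j : ℕ) (hq : ‖q‖ < 1) : Bb q j 0 = 1 := by
  rw [Bb, if_pos (Nat.zero_le j), qBinom]
  rw [Nat.sub_zero, qPoch_zero, one_mul, div_self (qPoch_q_ne_zero hq j)]

lemma Bb_gt (q : ℂ) {j n : ℕ} (h : j < n) : Bb q j n = 0 := by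
  rw [Bb, if_neg (by omega)]
section Pascal
variable {q : ℂ}

lemma one_sub_q_mul_pow_ne (hq : ‖q‖ < 1) (n : ℕ) : (1 : ℂ) - q * q ^ n ≠ 0 := by
  have := one_sub_pow_ne hq (n + 1) (by omega); rwa [pow_succ'] at this

lemma Pascal1 (hq : ‖q‖ < 1) (j n : ℕ) :
    Bb q (j + 1) (n + 1) = Bb q j n + q ^ (n + 1) * Bb q j (n + 1) := by
  rcases lt_trichotomy n j with h | h | h
  · obtain ⟨d, rfl⟩ : ∃ d, j = n + 1 + d := ⟨j - (n + 1), by omega⟩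
    rw [Bb, if_pos (by omega), Bb, if_pos (by omega), Bb, if_pos (by omega)]
    rw [qBinom, qBinom, qBinom]
    have e1 : n + 1 + d + 1 - (n + 1) = d + 1 := by omega
    have e2 : n + 1 + d - n = d + 1 := by omega
    have e3 : n + 1 + d - (n + 1) = d := by omega
    rw [e1, e2, e3]
    rw [qPoch_succ q q (n + 1 + d), qPoch_succ q q n, qPoch_succ q q d]
    have nz1 := qPoch_q_ne_zero hq (n + 1 + d)
    have nz2 := qPoch_q_ne_zero hq n
    have nz3 := qPoch_q_ne_zero hq d
    have nz4 := qPoch_q_ne_zero hq (n + 1)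
    have nzn := one_sub_q_mul_pow_ne hq n
    have nzd := one_sub_q_mul_pow_ne hq d
    field_simp
    ring
  · subst h
    rw [Bb_self q (n + 1) hq, Bb_self q n hq, Bb_gt q (by omega)]
    ring
  · rw [Bb_gt q (by omega), Bb_gt q (by omega), Bb_gt q (by omega)]
    ring

lemma Pascal2 (hq : ‖q‖ < 1) (j n : ℕ) :
    Bb q (j + 1) (n + 1) = Bb q j (n + 1) + q ^ (j - n) * Bb q j n := by
  rcases lt_trichotomy n j with h | h | h
  · obtain ⟨d, rfl⟩ : ∃ d, j = n + 1 + d := ⟨j - (n + 1), by omega⟩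
    rw [Bb, if_pos (by omega), Bb, if_pos (by omega), Bb, if_pos (by omega)]
    rw [qBinom, qBinom, qBinom]
    have e1 : n + 1 + d + 1 - (n + 1) = d + 1 := by omega
    have e2 : n + 1 + d - n = d + 1 := by omega
    have e3 : n + 1 + d - (n + 1) = d := by omega
    rw [e1, e2, e3]
    rw [qPoch_succ q q (n + 1 + d), qPoch_succ q q n, qPoch_succ q q d]
    have nz1 := qPoch_q_ne_zero hq (n + 1 + d)
    have nz2 := qPoch_q_ne_zero hq n
    have nz3 := qPoch_q_ne_zero hq d
    have nz4 := qPoch_q_ne_zero hq (n + 1)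
    have nzn := one_sub_q_mul_pow_ne hq n
    have nzd := one_sub_q_mul_pow_ne hq d
    field_simp
    ring
  · subst h
    rw [Bb_self q (n + 1) hq, Bb_self q n hq, Bb_gt q (by omega), Nat.sub_self]
    ring
  · rw [Bb_gt q (by omega), Bb_gt q (by omega), Bb_gt q (by omega)]
    ring

lemma qBinom_mul (hq : ‖q‖ < 1) {n j N : ℕ} (h1 : n ≤ j) (h2 : j ≤ N) :
    qBinom q N n * qBinom q (N - n) (j - n) = qBinom q N j * qBinom q j n := by
  obtain ⟨d, rfl⟩ : ∃ d, j = n + d := ⟨j - n, by omega⟩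
  obtain ⟨e, rfl⟩ : ∃ e, N = n + d + e := ⟨N - (n + d), by omega⟩
  rw [qBinom, qBinom, qBinom, qBinom]
  have e1 : n + d + e - n = d + e := by omega
  have e2 : n + d - n = d := by omega
  have e3 : n + d + e - (n + d) = e := by omega
  rw [e1, e2, e3, show d + e - d = e from by omega]
  have nz1 := qPoch_q_ne_zero hq n
  have nz2 := qPoch_q_ne_zero hq d
  have nz3 := qPoch_q_ne_zero hq e
  have nz4 := qPoch_q_ne_zero hq (n + d)
  have nz5 := qPoch_q_ne_zero hq (n + d + e)
  have nz6 := qPoch_q_ne_zero hq (d + e)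
  field_simp
end Pascal
section QBT
variable {q : ℂ}

lemma qbinomThm (hq : ‖q‖ < 1) : ∀ (M : ℕ) (x : ℂ),
    qPoch q x M = ∑ m ∈ Finset.range (M + 1), (-1) ^ m * q ^ c2 m * Bb q M m * x ^ m := by
  intro M
  induction M with
  | zero =>
      intro x
      simp [qPoch_zero, Bb_zero q 0 hq, c2]
  | succ M ih =>
      intro x
      rw [qPoch_succ, ih x]
      set f' : ℕ → ℂ := fun m => (-1) ^ m * q ^ c2 m * Bb q M m * x ^ m with hf'
      have top : f' (M + 1) = 0 := by
        simp [hf', Bb_gt q (Nat.lt_succ_self M)]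
      have key : ∑ m ∈ Finset.range (M + 1 + 1), (-1) ^ m * q ^ c2 m * Bb q (M + 1) m * x ^ m
          = ∑ m ∈ Finset.range (M + 1),
              (((-1) ^ (m + 1) * q ^ c2 (m + 1) * Bb q M (m + 1) * x ^ (m + 1))
                + (-(x * q ^ M)) * f' m)
            + 1 := by
        rw [Finset.sum_range_succ' (fun m => (-1) ^ m * q ^ c2 m * Bb q (M + 1) m * x ^ m) (M + 1)]
        congr 1
        · apply Finset.sum_congr rfl
          intro m hm
          have hm' : m ≤ M := Nat.lt_succ_iff.1 (Finset.mem_range.1 hm)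
          rw [Pascal2 hq M m]
          have hpow : q ^ c2 (m + 1) * q ^ (M - m) = q ^ c2 m * q ^ M := by
            rw [← pow_add, ← pow_add]
            congr 1
            have := c2_succ m
            have hm'' : m ≤ M := Nat.lt_succ_iff.1 (Finset.mem_range.1 hm)
            omega
          simp only [hf']
          linear_combination ((-1 : ℂ)) ^ (m + 1) * Bb q M m * x ^ (m + 1) * hpow
        · simp [Bb_zero q (M + 1) hq, c2]
      have h1 : ∑ m ∈ Finset.range (M + 1),
          (-1) ^ (m + 1) * q ^ c2 (m + 1) * Bb q M (m + 1) * x ^ (m + 1) + 1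
          = ∑ m ∈ Finset.range (M + 1), f' m := by
        have h0 := Finset.sum_range_succ' f' (M + 1)
        rw [Finset.sum_range_succ f' (M + 1), top, add_zero] at h0
        rw [h0]
        have e0 : f' 0 = 1 := by simp [hf', Bb_zero q M hq, c2]
        rw [e0]
      have h2 : ∑ m ∈ Finset.range (M + 1), (-(x * q ^ M)) * f' m
          = (-(x * q ^ M)) * ∑ m ∈ Finset.range (M + 1), f' m := by
        rw [Finset.mul_sum]
      -- combine
      calc (∑ m ∈ Finset.range (M + 1), f' m) * (1 - x * q ^ M)
          = (∑ m ∈ Finset.range (M + 1), f' m)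
            + (-(x * q ^ M)) * ∑ m ∈ Finset.range (M + 1), f' m := by ring
        _ = ∑ m ∈ Finset.range (M + 1),
              (-1) ^ (m + 1) * q ^ c2 (m + 1) * Bb q M (m + 1) * x ^ (m + 1) + 1
            + ∑ m ∈ Finset.range (M + 1), (-(x * q ^ M)) * f' m := by rw [h1, h2]
        _ = ∑ m ∈ Finset.range (M + 1 + 1), (-1) ^ m * q ^ c2 m * Bb q (M + 1) m * x ^ m := by
            rw [Finset.sum_add_distrib] at key
            linear_combination -key
end QBT
section UW
variable {q : ℂ}

lemma zq_pow (z q : ℂ) (k : ℕ) : z * q * q ^ k = z * q ^ (k + 1) := by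
  rw [pow_succ']; ring

lemma lemU (hq : ‖q‖ < 1) : ∀ (m : ℕ) (z : ℂ),
    (∀ k, 1 ≤ k → k ≤ m + 1 → z * q ^ k ≠ 1) →
    ∑ n ∈ Finset.range (m + 1),
        Bb q m n * ((-1) ^ n * q ^ c2 (n + 1) * z ^ n * qPoch q q n / qPoch q (z * q) (n + 1))
      = 1 / (1 - z * q ^ (m + 1)) := by
  intro m
  induction m with
  | zero =>
      intro z h
      rw [Finset.sum_range_one, Bb_zero q 0 hq]
      simp [qPoch_zero, qPoch_succ, c2]
  | succ m ih =>
      intro z h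
      set t : ℕ → ℂ := fun n =>
        (-1) ^ n * q ^ c2 (n + 1) * z ^ n * qPoch q q n / qPoch q (z * q) (n + 1) with ht
      have hzq : (1 : ℂ) - z * q ≠ 0 := by
        have := one_sub_zq_ne (q := q) h (le_refl 1) (by omega)
        simpa using this
      -- splitting
      have splitR : ∑ n ∈ Finset.range (m + 1), Bb q m n * (t (n + 1) + q ^ n * t n)
          = (∑ n ∈ Finset.range (m + 1), Bb q m n * t (n + 1))
            + ∑ n ∈ Finset.range (m + 1), Bb q m n * (q ^ n * t n) := by
        rw [← Finset.sum_add_distrib]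
        exact Finset.sum_congr rfl fun n _ => by ring
      have f1 : ∑ n ∈ Finset.range (m + 1), Bb q (m + 1) (n + 1) * t (n + 1)
          = (∑ n ∈ Finset.range (m + 1), Bb q m n * t (n + 1))
            + ∑ n ∈ Finset.range (m + 1), q ^ (n + 1) * Bb q m (n + 1) * t (n + 1) := by
        rw [← Finset.sum_add_distrib]
        refine Finset.sum_congr rfl fun n _ => ?_
        rw [Pascal1 hq m n]; ring
      have f2 : (∑ n ∈ Finset.range (m + 1), q ^ (n + 1) * Bb q m (n + 1) * t (n + 1))
            + Bb q (m + 1) 0 * t 0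
          = ∑ n ∈ Finset.range (m + 1), Bb q m n * (q ^ n * t n) := by
        have hg1 := Finset.sum_range_succ' (fun n => Bb q m n * (q ^ n * t n)) (m + 1)
        have hg2 := Finset.sum_range_succ (fun n => Bb q m n * (q ^ n * t n)) (m + 1)
        rw [Bb_gt q (Nat.lt_succ_self m), zero_mul, add_zero] at hg2
        rw [hg2] at hg1
        rw [hg1, Bb_zero q (m + 1) hq, Bb_zero q m hq, one_mul, one_mul, pow_zero, one_mul]
        congr 1
        exact Finset.sum_congr rfl fun n _ => by ring
      have split : ∑ n ∈ Finset.range (m + 1 + 1), Bb q (m + 1) n * t n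
          = ∑ n ∈ Finset.range (m + 1), Bb q m n * (t (n + 1) + q ^ n * t n) := by
        rw [Finset.sum_range_succ' (fun n => Bb q (m + 1) n * t n) (m + 1)]
        rw [f1, add_assoc, f2, ← splitR]
      rw [split]
      -- pointwise
      have point : ∀ n ∈ Finset.range (m + 1),
          Bb q m n * (t (n + 1) + q ^ n * t n)
            = Bb q m n * ((-1) ^ n * q ^ c2 (n + 1) * (z * q) ^ n * qPoch q q n
                / qPoch q (z * q * q) (n + 1)) := by
        intro n hn
        have hnm : n ≤ m := Nat.lt_succ_iff.1 (Finset.mem_range.1 hn)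
        congr 1
        have hP1 : qPoch q (z * q) (n + 1) ≠ 0 :=
          qPoch_ne_zero_of_ne_one (fun k h1 h2 => h k h1 (by omega))
        have hc1 : (1 : ℂ) - z * q * q ^ (n + 1) ≠ 0 := by
          rw [zq_pow]
          exact one_sub_zq_ne h (by omega) (by omega)
        have e1 : qPoch q (z * q) (n + 1 + 1) = qPoch q (z * q) (n + 1) * (1 - z * q * q ^ (n + 1)) :=
          qPoch_succ q (z * q) (n + 1)
        have e2 : qPoch q (z * q) (n + 1 + 1) = (1 - z * q) * qPoch q (z * q * q) (n + 1) :=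
          qPoch_succ' q (z * q) (n + 1)
        have hA : qPoch q (z * q * q) (n + 1)
            = qPoch q (z * q) (n + 1) * (1 - z * q * q ^ (n + 1)) / (1 - z * q) := by
          rw [eq_div_iff hzq]
          linear_combination e1 - e2
        simp only [ht]
        rw [hA, e1, qPoch_succ q q n, c2_succ (n + 1)]
        have hm1 : ((-1 : ℂ)) ^ (n + 1) = -(-1 : ℂ) ^ n := by rw [pow_succ]; ring
        rw [hm1]
        have hc1' : (1 : ℂ) - q * z * q ^ (n + 1) ≠ 0 := by rwa [mul_comm q z]
        have hP1' : qPoch q (q * z) (n + 1) ≠ 0 := by rwa [mul_comm q z]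
        field_simp
        ring
      rw [Finset.sum_congr rfl point]
      have ih' := ih (z * q) (fun k h1 h2 => by
        rw [zq_pow]
        exact h (k + 1) (by omega) (by omega))
      rw [ih', zq_pow]

lemma lemW (hq : ‖q‖ < 1) : ∀ (m : ℕ) (z : ℂ),
    (∀ k, 1 ≤ k → k ≤ m + 1 → z * q ^ k ≠ 1) →
    ∑ n ∈ Finset.range (m + 1),
        Bb q m n * ((-1) ^ n * q ^ c2 (m - n) * qPoch q q n / qPoch q (z * q) (n + 1))
      = q ^ c2 (m + 1) / (1 - z * q ^ (m + 1)) := by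
  intro m
  induction m with
  | zero =>
      intro z h
      rw [Finset.sum_range_one, Bb_zero q 0 hq]
      simp [qPoch_zero, qPoch_succ, c2]
  | succ m ih =>
      intro z h
      have hzq : (1 : ℂ) - z * q ≠ 0 := by
        have := one_sub_zq_ne (q := q) h (le_refl 1) (by omega)
        simpa using this
      set s : ℕ → ℂ := fun n =>
        (-1) ^ n * q ^ c2 (m + 1 - n) * qPoch q q n / qPoch q (z * q) (n + 1) with hs
      have splitR : ∑ n ∈ Finset.range (m + 1), Bb q m n * (s n + q ^ (m - n) * s (n + 1))
          = (∑ n ∈ Finset.range (m + 1), Bb q m n * s n)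
            + ∑ n ∈ Finset.range (m + 1), q ^ (m - n) * Bb q m n * s (n + 1) := by
        rw [← Finset.sum_add_distrib]
        exact Finset.sum_congr rfl fun n _ => by ring
      have f1 : ∑ n ∈ Finset.range (m + 1), Bb q (m + 1) (n + 1) * s (n + 1)
          = (∑ n ∈ Finset.range (m + 1), Bb q m (n + 1) * s (n + 1))
            + ∑ n ∈ Finset.range (m + 1), q ^ (m - n) * Bb q m n * s (n + 1) := by
        rw [← Finset.sum_add_distrib]
        refine Finset.sum_congr rfl fun n _ => ?_
        rw [Pascal2 hq m n]; ring
      have f2 : (∑ n ∈ Finset.range (m + 1), Bb q m (n + 1) * s (n + 1))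
            + Bb q (m + 1) 0 * s 0
          = ∑ n ∈ Finset.range (m + 1), Bb q m n * s n := by
        have hg1 := Finset.sum_range_succ' (fun n => Bb q m n * s n) (m + 1)
        have hg2 := Finset.sum_range_succ (fun n => Bb q m n * s n) (m + 1)
        rw [Bb_gt q (Nat.lt_succ_self m), zero_mul, add_zero] at hg2
        rw [hg2] at hg1
        rw [hg1, Bb_zero q (m + 1) hq, Bb_zero q m hq]
      have split : ∑ n ∈ Finset.range (m + 1 + 1), Bb q (m + 1) n * s n
          = ∑ n ∈ Finset.range (m + 1), Bb q m n * (s n + q ^ (m - n) * s (n + 1)) := by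
        rw [Finset.sum_range_succ' (fun n => Bb q (m + 1) n * s n) (m + 1)]
        rw [f1, add_assoc, add_comm (∑ n ∈ Finset.range (m + 1), q ^ (m - n) * Bb q m n * s (n + 1)),
          ← add_assoc, f2, splitR]
      rw [split]
      -- pointwise : s n + q^(m-n) * s (n+1) = q^(m+1) * w n (z*q)
      have point : ∀ n ∈ Finset.range (m + 1),
          Bb q m n * (s n + q ^ (m - n) * s (n + 1))
            = Bb q m n * (q ^ (m + 1) *
                ((-1) ^ n * q ^ c2 (m - n) * qPoch q q n / qPoch q (z * q * q) (n + 1))) := by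
        intro n hn
        have hnm : n ≤ m := Nat.lt_succ_iff.1 (Finset.mem_range.1 hn)
        congr 1
        have hP1 : qPoch q (z * q) (n + 1) ≠ 0 :=
          qPoch_ne_zero_of_ne_one (fun k h1 h2 => h k h1 (by omega))
        have hc1 : (1 : ℂ) - z * q * q ^ (n + 1) ≠ 0 := by
          rw [zq_pow]
          exact one_sub_zq_ne h (by omega) (by omega)
        have e1 : qPoch q (z * q) (n + 1 + 1) = qPoch q (z * q) (n + 1) * (1 - z * q * q ^ (n + 1)) :=
          qPoch_succ q (z * q) (n + 1)
        have e2 : qPoch q (z * q) (n + 1 + 1) = (1 - z * q) * qPoch q (z * q * q) (n + 1) :=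
          qPoch_succ' q (z * q) (n + 1)
        have hA : qPoch q (z * q * q) (n + 1)
            = qPoch q (z * q) (n + 1) * (1 - z * q * q ^ (n + 1)) / (1 - z * q) := by
          rw [eq_div_iff hzq]
          linear_combination e1 - e2
        have ec2 : c2 (m + 1 - n) = c2 (m - n) + (m - n) := by
          have : m + 1 - n = (m - n) + 1 := by omega
          rw [this, c2_succ]
        have ec2' : m + 1 - (n + 1) = m - n := by omega
        simp only [hs]
        rw [hA, e1, qPoch_succ q q n, ec2, ec2']
        have hm1 : ((-1 : ℂ)) ^ (n + 1) = -(-1 : ℂ) ^ n := by rw [pow_succ]; ring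
        rw [hm1]
        have hq1 : q ^ (m + 1) = q ^ (m - n) * q ^ (n + 1) := by
          rw [← pow_add]; congr 1; omega
        rw [hq1]
        field_simp
        ring
      rw [Finset.sum_congr rfl point]
      have ih' := ih (z * q) (fun k h1 h2 => by
        rw [zq_pow]
        exact h (k + 1) (by omega) (by omega))
      have factored : ∑ n ∈ Finset.range (m + 1), Bb q m n * (q ^ (m + 1) *
            ((-1) ^ n * q ^ c2 (m - n) * qPoch q q n / qPoch q (z * q * q) (n + 1)))
          = q ^ (m + 1) * ∑ n ∈ Finset.range (m + 1), Bb q m n *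
            ((-1) ^ n * q ^ c2 (m - n) * qPoch q q n / qPoch q (z * q * q) (n + 1)) := by
        rw [Finset.mul_sum]
        exact Finset.sum_congr rfl (fun n _ => by ring)
      rw [factored, ih', zq_pow]
      rw [← mul_div_assoc]
      congr 1
      rw [← pow_add]
      congr 1
      rw [c2_succ (m + 1)]
      omega
section ST
variable {q : ℂ}

lemma lemS (hq : ‖q‖ < 1) (j : ℕ) (z : ℂ)
    (h : ∀ k, 1 ≤ k → k ≤ j + 1 → z * q ^ k ≠ 1) :
    ∑ n ∈ Finset.range (j + 1 + 1),
        Bb q (j + 1) n * ((-1) ^ n * q ^ c2 n * z ^ n * qPoch q q n / qPoch q (z * q) n)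
      = (1 - z) / (1 - z * q ^ (j + 1)) := by
  set a : ℕ → ℂ := fun n =>
    (-1) ^ n * q ^ c2 n * z ^ n * qPoch q q n / qPoch q (z * q) n with ha
  have f1 : ∑ n ∈ Finset.range (j + 1), Bb q (j + 1) (n + 1) * a (n + 1)
      = (∑ n ∈ Finset.range (j + 1), Bb q j n * a (n + 1))
        + ∑ n ∈ Finset.range (j + 1), q ^ (n + 1) * Bb q j (n + 1) * a (n + 1) := by
    rw [← Finset.sum_add_distrib]
    refine Finset.sum_congr rfl fun n _ => ?_
    rw [Pascal1 hq j n]; ring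
  have f2 : (∑ n ∈ Finset.range (j + 1), q ^ (n + 1) * Bb q j (n + 1) * a (n + 1))
        + Bb q (j + 1) 0 * a 0
      = ∑ n ∈ Finset.range (j + 1), Bb q j n * (q ^ n * a n) := by
    have hg1 := Finset.sum_range_succ' (fun n => Bb q j n * (q ^ n * a n)) (j + 1)
    have hg2 := Finset.sum_range_succ (fun n => Bb q j n * (q ^ n * a n)) (j + 1)
    rw [Bb_gt q (Nat.lt_succ_self j), zero_mul, add_zero] at hg2
    rw [hg2] at hg1
    rw [hg1, Bb_zero q (j + 1) hq, Bb_zero q j hq, one_mul, one_mul, pow_zero, one_mul]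
    congr 1
    exact Finset.sum_congr rfl fun n _ => by ring
  have split : ∑ n ∈ Finset.range (j + 1 + 1), Bb q (j + 1) n * a n
      = ∑ n ∈ Finset.range (j + 1), Bb q j n * (a (n + 1) + q ^ n * a n) := by
    rw [Finset.sum_range_succ' (fun n => Bb q (j + 1) n * a n) (j + 1)]
    rw [f1, add_assoc, f2, ← Finset.sum_add_distrib]
    exact Finset.sum_congr rfl fun n _ => by ring
  rw [split]
  have point : ∀ n ∈ Finset.range (j + 1),
      Bb q j n * (a (n + 1) + q ^ n * a n)
        = (1 - z) * (Bb q j n *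
            ((-1) ^ n * q ^ c2 (n + 1) * z ^ n * qPoch q q n / qPoch q (z * q) (n + 1))) := by
    intro n hn
    have hnj : n ≤ j := Nat.lt_succ_iff.1 (Finset.mem_range.1 hn)
    have hPn : qPoch q (z * q) n ≠ 0 :=
      qPoch_ne_zero_of_ne_one (fun k h1 h2 => h k h1 (by omega))
    have hcn : (1 : ℂ) - z * q * q ^ n ≠ 0 := by
      rw [zq_pow]
      exact one_sub_zq_ne h (by omega) (by omega)
    have e1 : qPoch q (z * q) (n + 1) = qPoch q (z * q) n * (1 - z * q * q ^ n) :=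
      qPoch_succ q (z * q) n
    simp only [ha]
    rw [e1, qPoch_succ q q n, c2_succ n]
    have hm1 : ((-1 : ℂ)) ^ (n + 1) = -(-1 : ℂ) ^ n := by rw [pow_succ]; ring
    rw [hm1]
    have hcn' : (1 : ℂ) - q * q ^ n * z ≠ 0 := by
      rw [show q * q ^ n * z = z * q * q ^ n by ring]; exact hcn
    have hPn' : qPoch q (q * z) n ≠ 0 := by rwa [mul_comm q z]
    field_simp
    ring
  rw [Finset.sum_congr rfl point, ← Finset.mul_sum, lemU hq j z h]
  rw [mul_one_div]

lemma lemT (hq : ‖q‖ < 1) (j : ℕ) (z : ℂ)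
    (h : ∀ k, 1 ≤ k → k ≤ j + 1 → z * q ^ k ≠ 1) :
    ∑ n ∈ Finset.range (j + 1 + 1),
        Bb q (j + 1) n * ((-1) ^ n * q ^ c2 (j + 1 - n) * qPoch q q n / qPoch q (z * q) n)
      = q ^ c2 (j + 1 + 1) * (1 - z) / (1 - z * q ^ (j + 1)) := by
  set b : ℕ → ℂ := fun n =>
    (-1) ^ n * q ^ c2 (j + 1 - n) * qPoch q q n / qPoch q (z * q) n with hb
  have f1 : ∑ n ∈ Finset.range (j + 1), Bb q (j + 1) (n + 1) * b (n + 1)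
      = (∑ n ∈ Finset.range (j + 1), Bb q j (n + 1) * b (n + 1))
        + ∑ n ∈ Finset.range (j + 1), q ^ (j - n) * Bb q j n * b (n + 1) := by
    rw [← Finset.sum_add_distrib]
    refine Finset.sum_congr rfl fun n _ => ?_
    rw [Pascal2 hq j n]; ring
  have f2 : (∑ n ∈ Finset.range (j + 1), Bb q j (n + 1) * b (n + 1))
        + Bb q (j + 1) 0 * b 0
      = ∑ n ∈ Finset.range (j + 1), Bb q j n * b n := by
    have hg1 := Finset.sum_range_succ' (fun n => Bb q j n * b n) (j + 1)
    have hg2 := Finset.sum_range_succ (fun n => Bb q j n * b n) (j + 1)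
    rw [Bb_gt q (Nat.lt_succ_self j), zero_mul, add_zero] at hg2
    rw [hg2] at hg1
    rw [hg1, Bb_zero q (j + 1) hq, Bb_zero q j hq]
  have split : ∑ n ∈ Finset.range (j + 1 + 1), Bb q (j + 1) n * b n
      = ∑ n ∈ Finset.range (j + 1), Bb q j n * (b n + q ^ (j - n) * b (n + 1)) := by
    rw [Finset.sum_range_succ' (fun n => Bb q (j + 1) n * b n) (j + 1)]
    rw [f1, add_assoc, add_comm (∑ n ∈ Finset.range (j + 1), q ^ (j - n) * Bb q j n * b (n + 1)),
      ← add_assoc, f2, ← Finset.sum_add_distrib]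
    exact Finset.sum_congr rfl fun n _ => by ring
  rw [split]
  have point : ∀ n ∈ Finset.range (j + 1),
      Bb q j n * (b n + q ^ (j - n) * b (n + 1))
        = (1 - z) * q ^ (j + 1) * (Bb q j n *
            ((-1) ^ n * q ^ c2 (j - n) * qPoch q q n / qPoch q (z * q) (n + 1))) := by
    intro n hn
    have hnj : n ≤ j := Nat.lt_succ_iff.1 (Finset.mem_range.1 hn)
    have hPn : qPoch q (z * q) n ≠ 0 :=
      qPoch_ne_zero_of_ne_one (fun k h1 h2 => h k h1 (by omega))
    have hcn : (1 : ℂ) - z * q * q ^ n ≠ 0 := by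
      rw [zq_pow]
      exact one_sub_zq_ne h (by omega) (by omega)
    have e1 : qPoch q (z * q) (n + 1) = qPoch q (z * q) n * (1 - z * q * q ^ n) :=
      qPoch_succ q (z * q) n
    have ec2 : c2 (j + 1 - n) = c2 (j - n) + (j - n) := by
      have e : j + 1 - n = (j - n) + 1 := by omega
      rw [e, c2_succ]
    have ec2' : j + 1 - (n + 1) = j - n := by omega
    simp only [hb]
    rw [e1, qPoch_succ q q n, ec2, ec2']
    have hm1 : ((-1 : ℂ)) ^ (n + 1) = -(-1 : ℂ) ^ n := by rw [pow_succ]; ring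
    rw [hm1]
    have hq1 : q ^ (j + 1) = q ^ (j - n) * q ^ (n + 1) := by
      rw [← pow_add]; congr 1; omega
    rw [hq1]
    field_simp
    ring
  rw [Finset.sum_congr rfl point, ← Finset.mul_sum, lemW hq j z h]
  have hc : q ^ (j + 1) * q ^ c2 (j + 1) = q ^ c2 (j + 1 + 1) := by
    rw [← pow_add]; congr 1; rw [c2_succ (j + 1)]; omega
  rw [mul_div_assoc', mul_assoc, hc]
  ring
section Assembly
variable {q : ℂ}

lemma sum_shift (n N : ℕ) (h : n ≤ N) (g : ℕ → ℂ) :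
    ∑ j ∈ Finset.Icc n N, g j = ∑ m ∈ Finset.range (N - n + 1), g (n + m) := by
  rw [← Finset.Ico_add_one_right_eq_Icc, Finset.sum_Ico_eq_sum_range]
  rw [show N + 1 - n = N - n + 1 from by omega]

lemma sum_Icc_one_split (j : ℕ) (f : ℕ → ℂ) :
    ∑ n ∈ Finset.range (j + 1), f n = f 0 + ∑ n ∈ Finset.Icc 1 j, f n := by
  rw [← Finset.Ico_add_one_right_eq_Icc, Finset.range_eq_Ico, Finset.sum_eq_sum_Ico_succ_bot (by omega)]

lemma qPoch_shift_ne {c : ℂ} {n N : ℕ} (hn : n ≤ N)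
    (h : ∀ k, 1 ≤ k → k ≤ N → c * q ^ k ≠ 1) :
    qPoch q (c * q * q ^ n) (N - n) ≠ 0 := by
  rw [qPoch]
  apply Finset.prod_ne_zero_iff.2
  intro k hk
  have hkr : k < N - n := Finset.mem_range.1 hk
  have hne := h (n + k + 1) (by omega) (by omega)
  intro h0
  apply hne
  have e : c * q ^ (n + k + 1) = c * q * q ^ n * q ^ k := by
    rw [pow_add, pow_add]; ring
  rw [e]
  linear_combination -h0

lemma neg_one_pow_sub (j n : ℕ) (h : n ≤ j) :
    ((-1 : ℂ)) ^ (j - n) = (-1) ^ j * (-1) ^ n := by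
  have h2 : ((-1 : ℂ)) ^ (j - n) * (-1) ^ n = (-1) ^ j := by
    rw [← pow_add]; congr 1; omega
  have h3 : ((-1 : ℂ)) ^ n * (-1) ^ n = 1 := by
    rw [← mul_pow]; norm_num
  calc ((-1 : ℂ)) ^ (j - n) = (-1) ^ (j - n) * ((-1) ^ n * (-1) ^ n) := by rw [h3, mul_one]
    _ = ((-1) ^ (j - n) * (-1) ^ n) * (-1) ^ n := by ring
    _ = (-1) ^ j * (-1) ^ n := by rw [h2]

end Assembly
theorem stmt_2 (N : ℕ) (hN : 1 ≤ N) (q z c : ℂ) (hq : ‖q‖ < 1)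
    (hz : ∀ k ∈ Finset.Icc 1 N, z * q ^ k ≠ 1)
    (hcq : ∀ k ∈ Finset.Icc 1 N, c * q ^ k ≠ 1) :
    ∑ n ∈ Finset.Icc 1 N, qBinom q N n *
        (qPoch q q n * (z * c) ^ n * q ^ (n ^ 2)) /
        (qPoch q (z * q) n * qPoch q (c * q) n)
      = z * ∑ n ∈ Finset.Icc 1 N, qBinom q N n *
          (qPoch q q n * qPoch q (c * q) (N - n) * (c * q) ^ n) /
          (qPoch q (z * q) n * qPoch q (c * q) N) := by
  have hz' : ∀ k, 1 ≤ k → k ≤ N → z * q ^ k ≠ 1 :=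
    fun k h1 h2 => hz k (Finset.mem_Icc.2 ⟨h1, h2⟩)
  have hc' : ∀ k, 1 ≤ k → k ≤ N → c * q ^ k ≠ 1 :=
    fun k h1 h2 => hcq k (Finset.mem_Icc.2 ⟨h1, h2⟩)
  have hD : qPoch q (c * q) N ≠ 0 := qPoch_ne_zero_of_ne_one hc'
  set F : ℕ → ℕ → ℂ := fun n j =>
    c ^ j * ((-1) ^ j * (-1) ^ n * q ^ c2 (j + 1) * q ^ c2 n *
      qBinom q N j * qBinom q j n * qPoch q q n * z ^ n / qPoch q (z * q) n) with hF
  set G : ℕ → ℕ → ℂ := fun n j =>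
    c ^ j * ((-1) ^ j * (-1) ^ n * q ^ j * q ^ c2 (j - n) *
      qBinom q N j * qBinom q j n * qPoch q q n * z / qPoch q (z * q) n) with hG
  -- LEFT SIDE: claim1
  have claim1 : ∀ n ∈ Finset.Icc 1 N,
      qBinom q N n * (qPoch q q n * (z * c) ^ n * q ^ (n ^ 2)) /
          (qPoch q (z * q) n * qPoch q (c * q) n)
        = (∑ j ∈ Finset.Icc n N, F n j) / qPoch q (c * q) N := by
    intro n hn
    obtain ⟨hn1, hn2⟩ := Finset.mem_Icc.1 hn
    have hQ : qPoch q (c * q * q ^ n) (N - n) ≠ 0 := qPoch_shift_ne hn2 hc'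
    have hPc : qPoch q (c * q) n ≠ 0 :=
      qPoch_ne_zero_of_ne_one (fun k h1 h2 => hc' k h1 (le_trans h2 hn2))
    have hPz : qPoch q (z * q) n ≠ 0 :=
      qPoch_ne_zero_of_ne_one (fun k h1 h2 => hz' k h1 (le_trans h2 hn2))
    have hsplitD : qPoch q (c * q) N = qPoch q (c * q) n * qPoch q (c * q * q ^ n) (N - n) := by
      have h0 := qPoch_add q (c * q) n (N - n)
      rw [show n + (N - n) = N from by omega] at h0
      exact h0
    have key : ∑ j ∈ Finset.Icc n N, F n j
        = qBinom q N n * qPoch q q n * z ^ n * c ^ n * q ^ (n ^ 2) / qPoch q (z * q) n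
          * qPoch q (c * q * q ^ n) (N - n) := by
      rw [sum_shift n N hn2, qbinomThm hq (N - n) (c * q * q ^ n), Finset.mul_sum]
      refine Finset.sum_congr rfl fun m hm => ?_
      have hm' : m ≤ N - n := Nat.lt_succ_iff.1 (Finset.mem_range.1 hm)
      simp only [hF]
      rw [Bb, if_pos hm']
      have hbin : qBinom q N n * qBinom q (N - n) m = qBinom q N (n + m) * qBinom q (n + m) n := by
        have h0 := qBinom_mul hq (show n ≤ n + m by omega) (show n + m ≤ N by omega)
        rw [show n + m - n = m from by omega] at h0
        exact h0
      have hexp : (c * q * q ^ n) ^ m = c ^ m * q ^ (m + n * m) := by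
        rw [mul_pow, mul_pow, ← pow_mul, mul_assoc, ← pow_add]
      have hexp2 : q ^ (n ^ 2) * q ^ c2 m * q ^ (m + n * m) = q ^ c2 (n + m + 1) * q ^ c2 n := by
        rw [← pow_add, ← pow_add, ← pow_add]
        congr 1
        have e1 := c2_add (n + 1) m
        rw [show n + 1 + m = n + m + 1 from by omega, c2_succ n,
          show (n + 1) * m = n * m + m from by ring] at e1
        have e2 := two_c2 n
        linarith
      have hcomb : qBinom q N (n + m) * qBinom q (n + m) n * (q ^ c2 (n + m + 1) * q ^ c2 n)
          = qBinom q N n * qBinom q (N - n) m * (q ^ (n ^ 2) * q ^ c2 m * q ^ (m + n * m)) := by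
        rw [← hbin, hexp2]
      rw [hexp]
      have hsign2 : ((-1 : ℂ)) ^ (n + m) * (-1) ^ n = (-1) ^ m := by
        rw [← pow_add, show n + m + n = m + 2 * n from by omega, pow_add, pow_mul]
        norm_num
      rw [hsign2, pow_add c n m]
      field_simp
      linear_combination (c ^ n * c ^ m * z ^ n * qPoch q q n) * hcomb
    rw [key, hsplitD]
    rw [mul_pow z c n]
    field_simp
    ring_nf
    rw [mul_inv_cancel_right₀ hQ]
  -- RIGHT SIDE: claimR1
  have claimR1 : ∀ n ∈ Finset.Icc 1 N,
      z * (qBinom q N n * (qPoch q q n * qPoch q (c * q) (N - n) * (c * q) ^ n) /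
          (qPoch q (z * q) n * qPoch q (c * q) N))
        = (∑ j ∈ Finset.Icc n N, G n j) / qPoch q (c * q) N := by
    intro n hn
    obtain ⟨hn1, hn2⟩ := Finset.mem_Icc.1 hn
    have hPz : qPoch q (z * q) n ≠ 0 :=
      qPoch_ne_zero_of_ne_one (fun k h1 h2 => hz' k h1 (le_trans h2 hn2))
    have key : ∑ j ∈ Finset.Icc n N, G n j
        = z * qBinom q N n * qPoch q q n * c ^ n * q ^ n / qPoch q (z * q) n
          * qPoch q (c * q) (N - n) := by
      rw [sum_shift n N hn2, qbinomThm hq (N - n) (c * q), Finset.mul_sum]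
      refine Finset.sum_congr rfl fun m hm => ?_
      have hm' : m ≤ N - n := Nat.lt_succ_iff.1 (Finset.mem_range.1 hm)
      simp only [hG]
      rw [Bb, if_pos hm']
      have hbin : qBinom q N n * qBinom q (N - n) m = qBinom q N (n + m) * qBinom q (n + m) n := by
        have h0 := qBinom_mul hq (show n ≤ n + m by omega) (show n + m ≤ N by omega)
        rw [show n + m - n = m from by omega] at h0
        exact h0
      have hexp : (c * q) ^ m = c ^ m * q ^ m := mul_pow c q m
      rw [hexp]
      have hsign2 : ((-1 : ℂ)) ^ (n + m) * (-1) ^ n = (-1) ^ m := by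
        rw [← pow_add, show n + m + n = m + 2 * n from by omega, pow_add, pow_mul]
        norm_num
      rw [hsign2, pow_add c n m, pow_add q n m, show n + m - n = m from by omega]
      field_simp
      linear_combination (-(c ^ n * c ^ m * z * q ^ n * q ^ m
        * q ^ c2 m * qPoch q q n)) * hbin
    rw [key]
    rw [mul_pow c q n]
    field_simp
  -- swap of summation
  have swapF : ∑ n ∈ Finset.Icc 1 N, ∑ j ∈ Finset.Icc n N, F n j
      = ∑ j ∈ Finset.Icc 1 N, ∑ n ∈ Finset.Icc 1 j, F n j := by
    apply Finset.sum_comm'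
    intro x y
    simp only [Finset.mem_Icc]
    omega
  have swapG : ∑ n ∈ Finset.Icc 1 N, ∑ j ∈ Finset.Icc n N, G n j
      = ∑ j ∈ Finset.Icc 1 N, ∑ n ∈ Finset.Icc 1 j, G n j := by
    apply Finset.sum_comm'
    intro x y
    simp only [Finset.mem_Icc]
    omega
  -- inner sums via lemS / lemT
  have claim3 : ∀ j ∈ Finset.Icc 1 N,
      ∑ n ∈ Finset.Icc 1 j, F n j
        = (c ^ j * (-1) ^ j * q ^ c2 (j + 1) * qBinom q N j) *
            ((1 - z) / (1 - z * q ^ j) - 1) := by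
    intro j hj
    obtain ⟨hj1, hj2⟩ := Finset.mem_Icc.1 hj
    obtain ⟨jj, rfl⟩ : ∃ jj, j = jj + 1 := ⟨j - 1, by omega⟩
    have pull : ∀ n ∈ Finset.Icc 1 (jj + 1), F n (jj + 1)
        = (c ^ (jj + 1) * (-1) ^ (jj + 1) * q ^ c2 (jj + 1 + 1) * qBinom q N (jj + 1)) *
            (qBinom q (jj + 1) n *
              ((-1) ^ n * q ^ c2 n * z ^ n * qPoch q q n / qPoch q (z * q) n)) := by
      intro n _
      simp only [hF]
      ring
    rw [Finset.sum_congr rfl pull, ← Finset.mul_sum]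
    congr 1
    have hzj : ∀ k, 1 ≤ k → k ≤ jj + 1 → z * q ^ k ≠ 1 :=
      fun k h1 h2 => hz' k h1 (by omega)
    have hS := lemS hq jj z hzj
    rw [sum_Icc_one_split (jj + 1)
      (fun n => Bb q (jj + 1) n *
        ((-1) ^ n * q ^ c2 n * z ^ n * qPoch q q n / qPoch q (z * q) n))] at hS
    have h0 : Bb q (jj + 1) 0 *
        ((-1) ^ 0 * q ^ c2 0 * z ^ 0 * qPoch q q 0 / qPoch q (z * q) 0) = 1 := by
      rw [Bb_zero q (jj + 1) hq]
      simp [qPoch_zero, c2]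
    rw [h0] at hS
    have hBb : ∀ n ∈ Finset.Icc 1 (jj + 1),
        Bb q (jj + 1) n * ((-1) ^ n * q ^ c2 n * z ^ n * qPoch q q n / qPoch q (z * q) n)
          = qBinom q (jj + 1) n *
              ((-1) ^ n * q ^ c2 n * z ^ n * qPoch q q n / qPoch q (z * q) n) := by
      intro n hn
      obtain ⟨_, hn2⟩ := Finset.mem_Icc.1 hn
      rw [Bb, if_pos hn2]
    rw [Finset.sum_congr rfl hBb] at hS
    linear_combination hS
  have claim3R : ∀ j ∈ Finset.Icc 1 N,
      ∑ n ∈ Finset.Icc 1 j, G n j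
        = (c ^ j * (-1) ^ j * q ^ j * z * qBinom q N j) *
            (q ^ c2 (j + 1) * (1 - z) / (1 - z * q ^ j) - q ^ c2 j) := by
    intro j hj
    obtain ⟨hj1, hj2⟩ := Finset.mem_Icc.1 hj
    obtain ⟨jj, rfl⟩ : ∃ jj, j = jj + 1 := ⟨j - 1, by omega⟩
    have pull : ∀ n ∈ Finset.Icc 1 (jj + 1), G n (jj + 1)
        = (c ^ (jj + 1) * (-1) ^ (jj + 1) * q ^ (jj + 1) * z * qBinom q N (jj + 1)) *
            (qBinom q (jj + 1) n *
              ((-1) ^ n * q ^ c2 (jj + 1 - n) * qPoch q q n / qPoch q (z * q) n)) := by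
      intro n _
      simp only [hG]
      ring
    rw [Finset.sum_congr rfl pull, ← Finset.mul_sum]
    congr 1
    have hzj : ∀ k, 1 ≤ k → k ≤ jj + 1 → z * q ^ k ≠ 1 :=
      fun k h1 h2 => hz' k h1 (by omega)
    have hT := lemT hq jj z hzj
    rw [sum_Icc_one_split (jj + 1)
      (fun n => Bb q (jj + 1) n *
        ((-1) ^ n * q ^ c2 (jj + 1 - n) * qPoch q q n / qPoch q (z * q) n))] at hT
    have h0 : Bb q (jj + 1) 0 *
        ((-1) ^ 0 * q ^ c2 (jj + 1 - 0) * qPoch q q 0 / qPoch q (z * q) 0) = q ^ c2 (jj + 1) := by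
      rw [Bb_zero q (jj + 1) hq]
      simp [qPoch_zero]
    rw [h0] at hT
    have hBb : ∀ n ∈ Finset.Icc 1 (jj + 1),
        Bb q (jj + 1) n * ((-1) ^ n * q ^ c2 (jj + 1 - n) * qPoch q q n / qPoch q (z * q) n)
          = qBinom q (jj + 1) n *
              ((-1) ^ n * q ^ c2 (jj + 1 - n) * qPoch q q n / qPoch q (z * q) n) := by
      intro n hn
      obtain ⟨_, hn2⟩ := Finset.mem_Icc.1 hn
      rw [Bb, if_pos hn2]
    rw [Finset.sum_congr rfl hBb] at hT
    linear_combination hT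
  -- per-j coefficient identity
  have claimEq : ∀ j ∈ Finset.Icc 1 N,
      (c ^ j * (-1) ^ j * q ^ c2 (j + 1) * qBinom q N j) * ((1 - z) / (1 - z * q ^ j) - 1)
        = (c ^ j * (-1) ^ j * q ^ j * z * qBinom q N j) *
            (q ^ c2 (j + 1) * (1 - z) / (1 - z * q ^ j) - q ^ c2 j) := by
    intro j hj
    obtain ⟨hj1, hj2⟩ := Finset.mem_Icc.1 hj
    have hzq : (1 : ℂ) - z * q ^ j ≠ 0 := one_sub_zq_ne hz' hj1 hj2
    have pc : q ^ c2 (j + 1) = q ^ c2 j * q ^ j := by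
      rw [← pow_add]; congr 1
    rw [pc]
    have hzq' : (1 : ℂ) - q ^ j * z ≠ 0 := by rwa [mul_comm (q ^ j) z]
    field_simp
    ring
  -- put it together
  calc ∑ n ∈ Finset.Icc 1 N, qBinom q N n * (qPoch q q n * (z * c) ^ n * q ^ (n ^ 2)) /
          (qPoch q (z * q) n * qPoch q (c * q) n)
      = ∑ n ∈ Finset.Icc 1 N, (∑ j ∈ Finset.Icc n N, F n j) / qPoch q (c * q) N :=
        Finset.sum_congr rfl claim1
    _ = (∑ n ∈ Finset.Icc 1 N, ∑ j ∈ Finset.Icc n N, F n j) / qPoch q (c * q) N := by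
        rw [Finset.sum_div]
    _ = (∑ j ∈ Finset.Icc 1 N, ∑ n ∈ Finset.Icc 1 j, F n j) / qPoch q (c * q) N := by
        rw [swapF]
    _ = (∑ j ∈ Finset.Icc 1 N, (c ^ j * (-1) ^ j * q ^ c2 (j + 1) * qBinom q N j) *
          ((1 - z) / (1 - z * q ^ j) - 1)) / qPoch q (c * q) N := by
        rw [Finset.sum_congr rfl claim3]
    _ = (∑ j ∈ Finset.Icc 1 N, (c ^ j * (-1) ^ j * q ^ j * z * qBinom q N j) *
          (q ^ c2 (j + 1) * (1 - z) / (1 - z * q ^ j) - q ^ c2 j)) / qPoch q (c * q) N := by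
        rw [Finset.sum_congr rfl claimEq]
    _ = (∑ j ∈ Finset.Icc 1 N, ∑ n ∈ Finset.Icc 1 j, G n j) / qPoch q (c * q) N := by
        rw [Finset.sum_congr rfl claim3R]
    _ = (∑ n ∈ Finset.Icc 1 N, ∑ j ∈ Finset.Icc n N, G n j) / qPoch q (c * q) N := by
        rw [swapG]
    _ = ∑ n ∈ Finset.Icc 1 N, (∑ j ∈ Finset.Icc n N, G n j) / qPoch q (c * q) N := by
        rw [Finset.sum_div]
    _ = ∑ n ∈ Finset.Icc 1 N, z * (qBinom q N n *
          (qPoch q q n * qPoch q (c * q) (N - n) * (c * q) ^ n) /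
          (qPoch q (z * q) n * qPoch q (c * q) N)) :=
        (Finset.sum_congr rfl claimR1).symm
    _ = z * ∑ n ∈ Finset.Icc 1 N, qBinom q N n *
          (qPoch q q n * qPoch q (c * q) (N - n) * (c * q) ^ n) /
          (qPoch q (z * q) n * qPoch q (c * q) N) := by
        rw [Finset.mul_sum]
end ST
end UW
end

section
/- (Finite analogue of Ramanujan's Entry 3.) Let N be a positive integer and q ∈ ℂ with |q| < 1. Let a, b ∈ ℂ with 0 < |a| < 1, |b| < 1, and a·q^k ≠ 1 and b·q^k ≠ 1 for 0 ≤ k ≤ N−1. Then ∑_{n=1}^{N} [N choose n]_q · (q;q)_n (b/a;q)_n (a;q)_{N−n} a^n / ((b;q)_n (1 − q^n) (a;q)_N) = ∑_{m=1}^{∞} (a^m − b^m)(1 − q^{mN}) / (1 − q^m), where the infinite series converges absolutely. -/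
open Finset

namespace Entry3Aux

/-! Auxiliary machinery for the finite analogue of Ramanujan's Entry 3.

We prove by induction on `N` the identity
`∑_{n=1}^N [N n]_q (q;q)_{n-1} ∏_{k<n}(a-bq^k) (a;q)_{N-n} / (b;q)_n
   = (a;q)_N ∑_{k<N} (aq^k/(1-aq^k) - bq^k/(1-bq^k))`,
using a Pascal-rule telescoping argument, and then convert both sides
to those appearing in the theorem statement. -/

noncomputable def pp (q a b : ℂ) (n : ℕ) : ℂ := ∏ k ∈ Finset.range n, (a - b * q ^ k)

/-- The summand of the finite sum, written without truncated subtraction: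
`tt q a b j k` is the term for `n = j+1` in the sum for `N = j+k+1`. -/
noncomputable def tt (q a b : ℂ) (j k : ℕ) : ℂ :=
  qPoch q q (j + k + 1) * qPoch q q j * pp q a b (j + 1) * qPoch q a k /
    (qPoch q q (j + 1) * qPoch q q k * qPoch q b (j + 1))

noncomputable def uu (q a b : ℂ) (j k : ℕ) : ℂ :=
  qPoch q q (j + k + 1) * qPoch q q j * pp q a b (j + 1) * qPoch q a (k + 1) /
    (qPoch q q (j + 1) * qPoch q q k * qPoch q b (j + 1))

noncomputable def vv (q a b : ℂ) (m c : ℕ) : ℂ :=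
  qPoch q q (m + c) * pp q a b (m + 1) * qPoch q a c / (qPoch q q c * qPoch q b (m + 1))

noncomputable def SS (q a b : ℂ) (M : ℕ) : ℂ := ∑ j ∈ Finset.range M, tt q a b j (M - 1 - j)

noncomputable def gT (q a b : ℂ) (N : ℕ) : ℂ :=
  ∑ k ∈ Finset.range N, (a * q ^ k / (1 - a * q ^ k) - b * q ^ k / (1 - b * q ^ k))

lemma qPoch_succ (q z : ℂ) (n : ℕ) :
    qPoch q z (n + 1) = qPoch q z n * (1 - z * q ^ n) := Finset.prod_range_succ _ _

lemma pp_succ (q a b : ℂ) (n : ℕ) :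
    pp q a b (n + 1) = pp q a b n * (a - b * q ^ n) := Finset.prod_range_succ _ _

lemma one_sub_ne {q z : ℂ} (hq : ‖q‖ < 1) (hz : ‖z‖ < 1) (n : ℕ) : (1 : ℂ) - z * q ^ n ≠ 0 := by
  have : ‖z * q ^ n‖ < 1 := by
    rw [norm_mul, norm_pow]
    calc ‖z‖ * ‖q‖ ^ n ≤ ‖z‖ * 1 := by
          apply mul_le_mul_of_nonneg_left _ (norm_nonneg z)
          exact pow_le_one₀ (norm_nonneg q) hq.le
      _ = ‖z‖ := mul_one _
      _ < 1 := hz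
  intro h
  rw [sub_eq_zero] at h
  rw [← h] at this
  simp at this

lemma qPoch_ne_zero {q z : ℂ} (hq : ‖q‖ < 1) (hz : ‖z‖ < 1) (n : ℕ) : qPoch q z n ≠ 0 := by
  rw [qPoch]
  exact Finset.prod_ne_zero_iff.mpr fun k _ => one_sub_ne hq hz k

section PerTerm
variable {q a b : ℂ} (hq : ‖q‖ < 1) (ha : ‖a‖ < 1) (hb : ‖b‖ < 1)
include hq hb

/-- First Pascal-rule split of the `N+1` term. -/
lemma split1 (j k : ℕ) :
    tt q a b j (k + 1) = uu q a b j k + q ^ (k + 1) * vv q a b j (k + 1) := by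
  have hDq : ∀ n, qPoch q q n ≠ 0 := qPoch_ne_zero hq hq
  have hPb : ∀ n, qPoch q b n ≠ 0 := qPoch_ne_zero hq hb
  rw [tt, uu, vv]
  simp only [show j + (k + 1) + 1 = (j + k + 1) + 1 from by omega,
    show j + (k + 1) = (j + k) + 1 from by omega]
  field_simp [hDq, hPb]
  rw [qPoch_succ q q (j + k + 1), qPoch_succ q q (j + k), qPoch_succ q q k, qPoch_succ q q j]
  ring

/-- Second Pascal-rule split of the `N+1` term. -/
lemma split2 (j k : ℕ) :
    tt q a b j (k + 1) = q ^ (j + 1) * uu q a b j k + vv q a b j (k + 1) := by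
  have hDq : ∀ n, qPoch q q n ≠ 0 := qPoch_ne_zero hq hq
  have hPb : ∀ n, qPoch q b n ≠ 0 := qPoch_ne_zero hq hb
  rw [tt, uu, vv]
  simp only [show j + (k + 1) + 1 = (j + k + 1) + 1 from by omega,
    show j + (k + 1) = (j + k) + 1 from by omega]
  field_simp [hDq, hPb]
  rw [qPoch_succ q q (j + k + 1), qPoch_succ q q (j + k), qPoch_succ q q k, qPoch_succ q q j]
  ring

/-- The key per-term combination identity. -/
lemma dagger (j k : ℕ) :
    (uu q a b j k + q ^ k * vv q a b (j + 1) k)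
      - b * q ^ (j + k + 1) * (q ^ (j + 1) * uu q a b j k + vv q a b (j + 1) k)
    = (1 - a * q ^ (j + k + 1)) * (1 - b * q ^ (j + k + 1)) * tt q a b j k := by
  have hDq : ∀ n, qPoch q q n ≠ 0 := qPoch_ne_zero hq hq
  have hPb : ∀ n, qPoch q b n ≠ 0 := qPoch_ne_zero hq hb
  rw [uu, vv, tt]
  simp only [show (j + 1) + k = (j + k) + 1 from by omega]
  field_simp [hDq, hPb]
  rw [qPoch_succ q a k, pp_succ q a b (j + 1), pp_succ q a b j, qPoch_succ q b (j + 1),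
    qPoch_succ q b j, qPoch_succ q q j]
  ring

lemma tt_top (N : ℕ) : tt q a b N 0 = vv q a b N 0 := by
  have hDq : ∀ n, qPoch q q n ≠ 0 := qPoch_ne_zero hq hq
  have hPb : ∀ n, qPoch q b n ≠ 0 := qPoch_ne_zero hq hb
  rw [tt, vv]
  field_simp [hDq, hPb]
  ring

lemma vv_zero (N : ℕ) : vv q a b 0 N = (a - b) * qPoch q a N / (1 - b) := by
  have hDq : ∀ n, qPoch q q n ≠ 0 := qPoch_ne_zero hq hq
  have hb1 : (1 : ℂ) - b ≠ 0 := by simpa using one_sub_ne hq hb 0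
  have pp1 : pp q a b 1 = a - b := by simp [pp]
  have pb1 : qPoch q b 1 = 1 - b := by simp [qPoch]
  rw [vv, pp1, pb1, show (0 : ℕ) + N = N from by omega,
    div_eq_div_iff (by exact mul_ne_zero (hDq N) hb1) hb1]
  ring

lemma split1' {j N : ℕ} (h : j < N) :
    tt q a b j (N - j) = uu q a b j (N - 1 - j) + q ^ (N - j) * vv q a b j (N - j) := by
  obtain ⟨k, rfl⟩ : ∃ k, N = j + k + 1 := ⟨N - 1 - j, by omega⟩
  rw [show j + k + 1 - j = k + 1 from by omega, show j + k + 1 - 1 - j = k from by omega]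
  exact split1 hq hb j k

lemma split2' {j N : ℕ} (h : j < N) :
    tt q a b j (N - j) = q ^ (j + 1) * uu q a b j (N - 1 - j) + vv q a b j (N - j) := by
  obtain ⟨k, rfl⟩ : ∃ k, N = j + k + 1 := ⟨N - 1 - j, by omega⟩
  rw [show j + k + 1 - j = k + 1 from by omega, show j + k + 1 - 1 - j = k from by omega]
  exact split2 hq hb j k

lemma dagger' {j N : ℕ} (h : j < N) :
    (uu q a b j (N - 1 - j) + q ^ (N - 1 - j) * vv q a b (j + 1) (N - 1 - j))
      - b * q ^ N * (q ^ (j + 1) * uu q a b j (N - 1 - j) + vv q a b (j + 1) (N - 1 - j))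
    = (1 - a * q ^ N) * (1 - b * q ^ N) * tt q a b j (N - 1 - j) := by
  obtain ⟨k, hk⟩ : ∃ k, N = j + k + 1 := ⟨N - 1 - j, by omega⟩
  subst hk
  rw [show j + k + 1 - 1 - j = k from by omega]
  exact dagger hq hb j k

/-- First decomposition of `SS (N+1)`. -/
lemma hS1 (N : ℕ) :
    SS q a b (N + 1)
      = (∑ j ∈ Finset.range N,
          (uu q a b j (N - 1 - j) + q ^ (N - 1 - j) * vv q a b (j + 1) (N - 1 - j)))
        + q ^ N * ((a - b) * qPoch q a N / (1 - b)) := by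
  have e0 : SS q a b (N + 1) = ∑ j ∈ Finset.range (N + 1), tt q a b j (N - j) := by
    simp only [SS, Nat.add_sub_cancel]
  have e1 : ∀ j ∈ Finset.range N,
      tt q a b j (N - j) = uu q a b j (N - 1 - j) + q ^ (N - j) * vv q a b j (N - j) :=
    fun j hj => split1' hq hb (Finset.mem_range.mp hj)
  rw [e0, Finset.sum_range_succ, Finset.sum_congr rfl e1, Nat.sub_self, tt_top hq hb N,
    Finset.sum_add_distrib]
  have e2 : (∑ j ∈ Finset.range N, q ^ (N - j) * vv q a b j (N - j)) + vv q a b N 0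
      = (∑ j ∈ Finset.range N, q ^ (N - 1 - j) * vv q a b (j + 1) (N - 1 - j))
        + q ^ N * ((a - b) * qPoch q a N / (1 - b)) := by
    have etop : vv q a b N 0 = q ^ (N - N) * vv q a b N (N - N) := by
      rw [Nat.sub_self]; simp
    rw [etop, ← Finset.sum_range_succ (fun j => q ^ (N - j) * vv q a b j (N - j)) N,
      Finset.sum_range_succ']
    congr 1
    · refine Finset.sum_congr rfl fun i hi => ?_
      rw [show N - (i + 1) = N - 1 - i from by omega]
    · rw [Nat.sub_zero, vv_zero hq hb]
  rw [add_assoc, e2, Finset.sum_add_distrib, add_assoc]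

/-- Second decomposition of `SS (N+1)`. -/
lemma hS2 (N : ℕ) :
    SS q a b (N + 1)
      = (∑ j ∈ Finset.range N,
          (q ^ (j + 1) * uu q a b j (N - 1 - j) + vv q a b (j + 1) (N - 1 - j)))
        + (a - b) * qPoch q a N / (1 - b) := by
  have e0 : SS q a b (N + 1) = ∑ j ∈ Finset.range (N + 1), tt q a b j (N - j) := by
    simp only [SS, Nat.add_sub_cancel]
  have e1 : ∀ j ∈ Finset.range N,
      tt q a b j (N - j) = q ^ (j + 1) * uu q a b j (N - 1 - j) + vv q a b j (N - j) :=
    fun j hj => split2' hq hb (Finset.mem_range.mp hj)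
  rw [e0, Finset.sum_range_succ, Finset.sum_congr rfl e1, Nat.sub_self, tt_top hq hb N,
    Finset.sum_add_distrib]
  have e2 : (∑ j ∈ Finset.range N, vv q a b j (N - j)) + vv q a b N 0
      = (∑ j ∈ Finset.range N, vv q a b (j + 1) (N - 1 - j))
        + (a - b) * qPoch q a N / (1 - b) := by
    have etop : vv q a b N 0 = vv q a b N (N - N) := by rw [Nat.sub_self]
    rw [etop, ← Finset.sum_range_succ (fun j => vv q a b j (N - j)) N,
      Finset.sum_range_succ']
    congr 1
    · refine Finset.sum_congr rfl fun i hi => ?_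
      rw [show N - (i + 1) = N - 1 - i from by omega]
    · rw [Nat.sub_zero, vv_zero hq hb]
  rw [add_assoc, e2, Finset.sum_add_distrib, add_assoc]

/-- The first-order recurrence for `SS`. -/
lemma step (N : ℕ) :
    (1 - b * q ^ N) * SS q a b (N + 1)
      = (1 - a * q ^ N) * (1 - b * q ^ N) * SS q a b N + q ^ N * (a - b) * qPoch q a N := by
  have hb1 : (1 : ℂ) - b ≠ 0 := by simpa using one_sub_ne hq hb 0
  have expand : (1 - b * q ^ N) * SS q a b (N + 1)
      = ((∑ j ∈ Finset.range N,
          (uu q a b j (N - 1 - j) + q ^ (N - 1 - j) * vv q a b (j + 1) (N - 1 - j)))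
        + q ^ N * ((a - b) * qPoch q a N / (1 - b)))
        - b * q ^ N * ((∑ j ∈ Finset.range N,
          (q ^ (j + 1) * uu q a b j (N - 1 - j) + vv q a b (j + 1) (N - 1 - j)))
        + (a - b) * qPoch q a N / (1 - b)) := by
    rw [← hS1 hq hb N, ← hS2 hq hb N]
    ring
  have eper : ∀ j ∈ Finset.range N,
      (uu q a b j (N - 1 - j) + q ^ (N - 1 - j) * vv q a b (j + 1) (N - 1 - j))
        - b * q ^ N * (q ^ (j + 1) * uu q a b j (N - 1 - j) + vv q a b (j + 1) (N - 1 - j))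
      = (1 - a * q ^ N) * (1 - b * q ^ N) * tt q a b j (N - 1 - j) :=
    fun j hj => dagger' hq hb (Finset.mem_range.mp hj)
  have hsum : (∑ j ∈ Finset.range N,
        (uu q a b j (N - 1 - j) + q ^ (N - 1 - j) * vv q a b (j + 1) (N - 1 - j)))
      - b * q ^ N * (∑ j ∈ Finset.range N,
        (q ^ (j + 1) * uu q a b j (N - 1 - j) + vv q a b (j + 1) (N - 1 - j)))
      = (1 - a * q ^ N) * (1 - b * q ^ N) * SS q a b N := by
    rw [Finset.mul_sum, ← Finset.sum_sub_distrib, Finset.sum_congr rfl eper, SS,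
      ← Finset.mul_sum]
  have hE : q ^ N * ((a - b) * qPoch q a N / (1 - b))
      - b * q ^ N * ((a - b) * qPoch q a N / (1 - b)) = q ^ N * (a - b) * qPoch q a N := by
    field_simp
  linear_combination expand + hsum + hE

end PerTerm

section Main
variable {q a b : ℂ} (hq : ‖q‖ < 1) (ha : ‖a‖ < 1) (hb : ‖b‖ < 1)

include hq ha hb in
/-- The main finite identity, by induction on `N`. -/
lemma key (N : ℕ) : SS q a b N = qPoch q a N * gT q a b N := by
  induction N with
  | zero => simp [SS, gT, qPoch]
  | succ N ih =>
    have h1a : (1 : ℂ) - a * q ^ N ≠ 0 := one_sub_ne hq ha N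
    have h1b : (1 : ℂ) - b * q ^ N ≠ 0 := one_sub_ne hq hb N
    have hstep := step hq hb (a := a) N
    rw [ih] at hstep
    apply mul_left_cancel₀ h1b
    rw [hstep]
    conv_rhs => rw [gT, Finset.sum_range_succ, ← gT, qPoch_succ]
    have e1 : a * q ^ N / (1 - a * q ^ N) * (1 - a * q ^ N) = a * q ^ N := div_mul_cancel₀ _ h1a
    have e2 : b * q ^ N / (1 - b * q ^ N) * (1 - b * q ^ N) = b * q ^ N := div_mul_cancel₀ _ h1b
    linear_combination (-(1 - b * q ^ N) * qPoch q a N) * e1 + ((1 - a * q ^ N) * qPoch q a N) * e2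

lemma pp_eq (ha0 : a ≠ 0) (n : ℕ) : pp q a b n = a ^ n * qPoch q (b / a) n := by
  rw [pp, qPoch]
  calc ∏ k ∈ Finset.range n, (a - b * q ^ k)
      = ∏ k ∈ Finset.range n, (a * (1 - b / a * q ^ k)) :=
        Finset.prod_congr rfl fun k _ => by field_simp
    _ = (∏ _k ∈ Finset.range n, a) * ∏ k ∈ Finset.range n, (1 - b / a * q ^ k) :=
        Finset.prod_mul_distrib
    _ = a ^ n * ∏ k ∈ Finset.range n, (1 - b / a * q ^ k) := by
        rw [Finset.prod_const, Finset.card_range]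

include hq ha hb in
lemma termEq (ha0 : a ≠ 0) {i N : ℕ} (h : i < N) :
    qBinom q N (1 + i) *
        (qPoch q q (1 + i) * qPoch q (b / a) (1 + i) * qPoch q a (N - (1 + i)) * a ^ (1 + i)) /
        (qPoch q b (1 + i) * (1 - q ^ (1 + i)) * qPoch q a N)
      = tt q a b i (N - 1 - i) / qPoch q a N := by
  obtain ⟨k, rfl⟩ : ∃ k, N = i + k + 1 := ⟨N - 1 - i, by omega⟩
  simp only [show 1 + i = i + 1 from by omega, show i + k + 1 - (i + 1) = k from by omega,
    show i + k + 1 - 1 - i = k from by omega]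
  have hDq : ∀ n, qPoch q q n ≠ 0 := qPoch_ne_zero hq hq
  have hPb : ∀ n, qPoch q b n ≠ 0 := qPoch_ne_zero hq hb
  have hPa : ∀ n, qPoch q a n ≠ 0 := qPoch_ne_zero hq ha
  have hq1 : (1 : ℂ) - q ^ (i + 1) = 1 - q * q ^ i := by rw [pow_succ]; ring
  have h1q' : (1 : ℂ) - q * q ^ i ≠ 0 := one_sub_ne hq hq i
  rw [qBinom, tt, pp_eq ha0, hq1]
  simp only [show i + k + 1 - (i + 1) = k from by omega]
  field_simp [hDq, hPb, hPa, h1q']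
  rw [qPoch_succ q q i]
  ring

include hq ha hb in
/-- The finite sum in the theorem equals `gT q a b N`. -/
lemma final_sum (ha0 : a ≠ 0) (N : ℕ) :
    ∑ n ∈ Finset.Icc 1 N, qBinom q N n *
        (qPoch q q n * qPoch q (b / a) n * qPoch q a (N - n) * a ^ n) /
        (qPoch q b n * (1 - q ^ n) * qPoch q a N)
      = gT q a b N := by
  have hPaN : qPoch q a N ≠ 0 := qPoch_ne_zero hq ha N
  rw [← Finset.Ico_add_one_right_eq_Icc, Finset.sum_Ico_eq_sum_range]
  have e1 : ∀ i ∈ Finset.range N,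
      qBinom q N (1 + i) *
        (qPoch q q (1 + i) * qPoch q (b / a) (1 + i) * qPoch q a (N - (1 + i)) * a ^ (1 + i)) /
        (qPoch q b (1 + i) * (1 - q ^ (1 + i)) * qPoch q a N)
      = tt q a b i (N - 1 - i) / qPoch q a N :=
    fun i hi => termEq hq ha hb ha0 (Finset.mem_range.mp hi)
  refine Eq.trans (Finset.sum_congr rfl e1) ?_
  rw [← Finset.sum_div]
  simp only [Nat.add_sub_cancel]
  have hfold : (∑ i ∈ Finset.range N, tt q a b i (N - 1 - i)) = SS q a b N := rfl
  rw [hfold, key hq ha hb N]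
  field_simp

end Main

section Geo
variable {q : ℂ} (hq : ‖q‖ < 1)

lemma geo_summable_shift (x : ℂ) (hx : ‖x‖ < 1) : Summable (fun m : ℕ => x ^ (m + 1)) := by
  refine ((summable_geometric_of_norm_lt_one hx).mul_left x).congr fun m => ?_
  rw [pow_succ]; ring

lemma geo_tsum_shift (x : ℂ) (hx : ‖x‖ < 1) : ∑' m : ℕ, x ^ (m + 1) = x / (1 - x) := by
  have h1 : ∀ m : ℕ, x * x ^ m = x ^ (m + 1) := fun m => by rw [pow_succ]; ring
  rw [← tsum_congr h1, tsum_mul_left, tsum_geometric_of_norm_lt_one hx, div_eq_mul_inv]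

include hq in
lemma norm_mul_pow_lt (x : ℂ) (hx : ‖x‖ < 1) (k : ℕ) : ‖x * q ^ k‖ < 1 := by
  calc ‖x * q ^ k‖ = ‖x‖ * ‖q‖ ^ k := by rw [norm_mul, norm_pow]
    _ ≤ ‖x‖ * 1 := mul_le_mul_of_nonneg_left (pow_le_one₀ (norm_nonneg q) hq.le) (norm_nonneg x)
    _ < 1 := by rwa [mul_one]

include hq in
lemma qpow_ne_one (m : ℕ) : q ^ (m + 1) ≠ 1 := by
  intro h
  have h2 : ‖q ^ (m + 1)‖ < 1 := by
    rw [norm_pow]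
    exact pow_lt_one₀ (norm_nonneg q) hq (Nat.succ_ne_zero m)
  rw [h] at h2
  simp at h2

include hq in
/-- Expansion of the infinite-series summand as a finite geometric sum. -/
lemma summand_eq (a b : ℂ) (N : ℕ) (m : ℕ) :
    (a ^ (m + 1) - b ^ (m + 1)) * (1 - q ^ ((m + 1) * N)) / (1 - q ^ (m + 1))
      = ∑ k ∈ Finset.range N, ((a * q ^ k) ^ (m + 1) - (b * q ^ k) ^ (m + 1)) := by
  have hx : q ^ (m + 1) ≠ 1 := qpow_ne_one hq m
  have h0 : (1 : ℂ) - q ^ (m + 1) ≠ 0 := sub_ne_zero.mpr (Ne.symm hx)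
  have hgeom : ∑ k ∈ Finset.range N, (q ^ (m + 1)) ^ k
      = ((q ^ (m + 1)) ^ N - 1) / (q ^ (m + 1) - 1) := geom_sum_eq hx N
  have h1 : (a ^ (m + 1) - b ^ (m + 1)) * (1 - q ^ ((m + 1) * N)) / (1 - q ^ (m + 1))
      = (a ^ (m + 1) - b ^ (m + 1)) * ∑ k ∈ Finset.range N, (q ^ (m + 1)) ^ k := by
    rw [hgeom, ← pow_mul]
    have h0' : q ^ (m + 1) - 1 ≠ 0 := sub_ne_zero.mpr hx
    field_simp
    ring
  rw [h1, Finset.mul_sum]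
  refine Finset.sum_congr rfl fun k _ => ?_
  rw [mul_pow, mul_pow, ← pow_mul, ← pow_mul, Nat.mul_comm k (m + 1)]
  ring

end Geo
end Entry3Aux

theorem stmt_5 (N : ℕ) (hN : 1 ≤ N) (q a b : ℂ) (hq : ‖q‖ < 1)
    (ha0 : 0 < ‖a‖) (ha1 : ‖a‖ < 1) (hb1 : ‖b‖ < 1)
    (haq : ∀ k < N, a * q ^ k ≠ 1) (hbq : ∀ k < N, b * q ^ k ≠ 1) :
    Summable (fun m : ℕ =>
        (a ^ (m + 1) - b ^ (m + 1)) * (1 - q ^ ((m + 1) * N)) / (1 - q ^ (m + 1))) ∧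
    ∑ n ∈ Finset.Icc 1 N, qBinom q N n *
        (qPoch q q n * qPoch q (b / a) n * qPoch q a (N - n) * a ^ n) /
        (qPoch q b n * (1 - q ^ n) * qPoch q a N)
      = ∑' m : ℕ,
          (a ^ (m + 1) - b ^ (m + 1)) * (1 - q ^ ((m + 1) * N)) / (1 - q ^ (m + 1)) := by
  have hq' : ‖q‖ < 1 := by exact hq
  have ha' : ‖a‖ < 1 := by exact ha1
  have hb' : ‖b‖ < 1 := by exact hb1
  have ha0' : a ≠ 0 := by
    intro h
    rw [h] at ha0
    simp at ha0
  have hFeq : ∀ m : ℕ,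
      (a ^ (m + 1) - b ^ (m + 1)) * (1 - q ^ ((m + 1) * N)) / (1 - q ^ (m + 1))
        = ∑ k ∈ Finset.range N, ((a * q ^ k) ^ (m + 1) - (b * q ^ k) ^ (m + 1)) :=
    Entry3Aux.summand_eq hq' a b N
  have hsuma : ∀ k : ℕ, Summable (fun m : ℕ => (a * q ^ k) ^ (m + 1)) :=
    fun k => Entry3Aux.geo_summable_shift _ (Entry3Aux.norm_mul_pow_lt hq' a ha' k)
  have hsumb : ∀ k : ℕ, Summable (fun m : ℕ => (b * q ^ k) ^ (m + 1)) :=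
    fun k => Entry3Aux.geo_summable_shift _ (Entry3Aux.norm_mul_pow_lt hq' b hb' k)
  have hsummand : ∀ k ∈ Finset.range N,
      Summable (fun m : ℕ => (a * q ^ k) ^ (m + 1) - (b * q ^ k) ^ (m + 1)) :=
    fun k _ => (hsuma k).sub (hsumb k)
  have hsummable : Summable (fun m : ℕ =>
      (a ^ (m + 1) - b ^ (m + 1)) * (1 - q ^ ((m + 1) * N)) / (1 - q ^ (m + 1))) :=
    (summable_congr hFeq).mpr (summable_sum hsummand)
  refine ⟨hsummable, ?_⟩
  rw [Entry3Aux.final_sum hq' ha' hb' ha0' N, tsum_congr hFeq, Summable.tsum_finsetSum hsummand]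
  rw [Entry3Aux.gT]
  refine Finset.sum_congr rfl fun k _ => ?_
  rw [Summable.tsum_sub (hsuma k) (hsumb k),
    Entry3Aux.geo_tsum_shift _ (Entry3Aux.norm_mul_pow_lt hq' a ha' k),
    Entry3Aux.geo_tsum_shift _ (Entry3Aux.norm_mul_pow_lt hq' b hb' k)]
end

section
/- Let N be a positive integer and q ∈ ℂ with |q| < 1. Let c, d ∈ ℂ with d ≠ 0 and c·q^k ≠ 1 for 1 ≤ k ≤ N. Then ∑_{n=1}^{N} [N choose n]_q · (c/d;q)_n d^n (−1)^{n−1} q^{n(n+1)/2} / (cq;q)_n = 1 − (dq;q)_N / (cq;q)_N. -/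
open Finset

/- Auxiliary definitions -/

/-- `u q c d n = (-1)^n q^{n(n+1)/2} ∏_{k<n} (d - c q^k)`. -/
noncomputable def auxU (q c d : ℂ) (n : ℕ) : ℂ :=
  (-1) ^ n * q ^ (n * (n + 1) / 2) * ∏ k ∈ Finset.range n, (d - c * q ^ k)

/-- `V q c n N = ∏_{j<N-n} (1 - c q^{n+1+j})`. -/
noncomputable def auxV (q c : ℂ) (n N : ℕ) : ℂ :=
  ∏ j ∈ Finset.range (N - n), (1 - c * q ^ (n + 1 + j))

/-- q-binomial with cutoff. -/
noncomputable def auxB (q : ℂ) (N n : ℕ) : ℂ :=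
  if n ≤ N then qBinom q N n else 0

lemma auxB_zero (q : ℂ) (N : ℕ) (hq : qPoch q q N ≠ 0) : auxB q N 0 = 1 := by
  rw [auxB, if_pos (Nat.zero_le N)]
  unfold qBinom
  rw [Nat.sub_zero, qPoch_zero, one_mul, div_self hq]

lemma auxB_self (q : ℂ) (N : ℕ) (hq : qPoch q q N ≠ 0) : auxB q N N = 1 := by
  rw [auxB, if_pos le_rfl]
  unfold qBinom
  rw [Nat.sub_self, qPoch_zero, mul_one, div_self hq]

lemma auxB_gt (q : ℂ) (N n : ℕ) (h : N < n) : auxB q N n = 0 := by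
  simp [auxB, Nat.not_le.mpr h]

lemma pascal (q : ℂ) (hq : ∀ m, qPoch q q m ≠ 0) (N n : ℕ) :
    auxB q (N + 1) (n + 1) = auxB q N (n + 1) + q ^ (N - n) * auxB q N n := by
  rcases lt_trichotomy n N with h | rfl | h
  · obtain ⟨m, rfl⟩ : ∃ m, N = n + 1 + m := ⟨N - n - 1, by omega⟩
    rw [auxB, if_pos (by omega : n + 1 ≤ n + 1 + m + 1),
        auxB, if_pos (by omega : n + 1 ≤ n + 1 + m),
        auxB, if_pos (by omega : n ≤ n + 1 + m)]
    unfold qBinom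
    have e1 : n + 1 + m + 1 - (n + 1) = m + 1 := by omega
    have e2 : n + 1 + m - (n + 1) = m := by omega
    have e3 : n + 1 + m - n = m + 1 := by omega
    rw [e1, e2, e3]
    have h1 : qPoch q q (n + 1 + m + 1) = qPoch q q (n + 1 + m) * (1 - q * q ^ (n + 1 + m)) :=
      qPoch_succ _ _ _
    have h2 : qPoch q q (m + 1) = qPoch q q m * (1 - q * q ^ m) := qPoch_succ _ _ _
    have h3 : qPoch q q (n + 1) = qPoch q q n * (1 - q * q ^ n) := qPoch_succ _ _ _
    rw [h1, h2, h3]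
    have hz1 := hq (n + 1 + m); have hz2 := hq m; have hz3 := hq n
    have hz4 : (1 : ℂ) - q * q ^ m ≠ 0 := by
      intro hcon; apply hq (m + 1); rw [h2, hcon, mul_zero]
    have hz5 : (1 : ℂ) - q * q ^ n ≠ 0 := by
      intro hcon; apply hq (n + 1); rw [h3, hcon, mul_zero]
    field_simp
    ring
  · rw [auxB_self q (n + 1) (hq (n + 1)), auxB_gt q n (n + 1) (Nat.lt_succ_self n),
        Nat.sub_self, pow_zero, auxB_self q n (hq n)]
    ring
  · rw [auxB_gt q (N + 1) (n + 1) (by omega), auxB_gt q N (n + 1) (by omega),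
        auxB_gt q N n h]
    ring

lemma auxU_succ (q c d : ℂ) (n : ℕ) :
    auxU q c d (n + 1) = auxU q c d n * (-(q ^ (n + 1)) * (d - c * q ^ n)) := by
  unfold auxU
  rw [Finset.prod_range_succ]
  obtain ⟨m, hm⟩ := Nat.even_mul_succ_self n
  have hexp : (n + 1) * (n + 1 + 1) = n * (n + 1) + 2 * (n + 1) := by ring
  have he : (n + 1) * (n + 1 + 1) / 2 = n * (n + 1) / 2 + (n + 1) := by omega
  rw [he, pow_add]
  ring

lemma auxU_shift (q c d : ℂ) (n : ℕ) :
    auxU q (c * q) (d * q) n = auxU q c d n * q ^ n := by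
  unfold auxU
  have : ∏ k ∈ Finset.range n, (d * q - c * q * q ^ k)
      = ∏ k ∈ Finset.range n, (q * (d - c * q ^ k)) := by
    apply Finset.prod_congr rfl; intro k _; ring
  rw [this, Finset.prod_mul_distrib, Finset.prod_const, Finset.card_range]
  ring

lemma auxV_succ_top (q c : ℂ) (n N : ℕ) (h : n ≤ N) :
    auxV q c n (N + 1) = auxV q c n N * (1 - c * q ^ (N + 1)) := by
  unfold auxV
  rw [show N + 1 - n = (N - n) + 1 from by omega, Finset.prod_range_succ,
      show n + 1 + (N - n) = N + 1 from by omega]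

lemma auxV_shift (q c : ℂ) (n N : ℕ) :
    auxV q c (n + 1) (N + 1) = auxV q (c * q) n N := by
  unfold auxV
  rw [show N + 1 - (n + 1) = N - n from by omega]
  apply Finset.prod_congr rfl
  intro j _
  rw [show n + 1 + 1 + j = (n + 1 + j) + 1 from by omega, pow_succ]
  ring

lemma auxV_split (q c : ℂ) (n N : ℕ) (h : n ≤ N) :
    (1 - c * q ^ (n + 1)) * auxV q c (n + 1) (N + 1) = auxV q c n (N + 1) := by
  unfold auxV
  have e : ∀ j ∈ Finset.range (N - n),
      (1 - c * q ^ (n + 1 + (j + 1))) = (1 - c * q ^ (n + 1 + 1 + j)) := by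
    intro j _; rw [show n + 1 + (j + 1) = n + 1 + 1 + j from by omega]
  rw [show N + 1 - n = (N - n) + 1 from by omega,
      show N + 1 - (n + 1) = N - n from by omega, Finset.prod_range_succ',
      Finset.prod_congr rfl e]
  ring

lemma key (q : ℂ) (hq : ∀ m, qPoch q q m ≠ 0) :
    ∀ N c d, ∑ n ∈ Finset.range (N + 1), auxB q N n * auxU q c d n * auxV q c n N
      = qPoch q (d * q) N := by
  intro N
  induction N with
  | zero =>
      intro c d
      simp [auxU, auxV, auxB_zero q 0 (hq 0), qPoch]
  | succ N ih =>
      intro c d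
      set f : ℕ → ℂ := fun n => auxB q (N + 1) n * auxU q c d n * auxV q c n (N + 1) with hf
      set g : ℕ → ℂ := fun n => auxB q N n * auxU q c d n * auxV q c n (N + 1) with hg
      set e : ℕ → ℂ := fun n =>
        auxB q N n * auxU q (c * q) (d * q) n * auxV q (c * q) n N with he
      have pointwise : ∀ n ∈ Finset.range (N + 1),
          f (n + 1) = g (n + 1) + (-(q ^ (N + 1)) * d) * g n
            + (q ^ (N + 1) * c * (1 - d * q)) * e n := by
        intro n hn
        have hnN : n ≤ N := Nat.lt_succ_iff.mp (Finset.mem_range.mp hn)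
        have hqp : q ^ (N - n) * q ^ (n + 1) = q ^ (N + 1) := by
          rw [← pow_add]; congr 1; omega
        simp only [hf, hg, he]
        rw [pascal q hq N n, auxU_succ, auxU_shift, ← auxV_shift q c n N,
            ← auxV_split q c n N hnN]
        linear_combination
          (-(auxB q N n * auxU q c d n * (d - c * q ^ n) * auxV q c (n + 1) (N + 1))) * hqp
      have hY : ∑ n ∈ Finset.range (N + 1), g n
          = (1 - c * q ^ (N + 1)) * qPoch q (d * q) N := by
        have hcg : ∀ n ∈ Finset.range (N + 1),
            g n = (auxB q N n * auxU q c d n * auxV q c n N) * (1 - c * q ^ (N + 1)) := by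
          intro n hn
          have hnN : n ≤ N := Nat.lt_succ_iff.mp (Finset.mem_range.mp hn)
          simp only [hg]
          rw [auxV_succ_top q c n N hnN]; ring
        rw [Finset.sum_congr rfl hcg, ← Finset.sum_mul, ih c d]; ring
      have hE : ∑ n ∈ Finset.range (N + 1), e n = qPoch q (d * q * q) N := ih (c * q) (d * q)
      have hX : (∑ n ∈ Finset.range (N + 1), g (n + 1)) + g 0
          = (1 - c * q ^ (N + 1)) * qPoch q (d * q) N := by
        rw [← Finset.sum_range_succ' g (N + 1), Finset.sum_range_succ]
        have hgz : g (N + 1) = 0 := by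
          simp only [hg]; rw [auxB_gt q N (N + 1) (Nat.lt_succ_self N)]; ring
        rw [hgz, add_zero, hY]
      have hf0g0 : f 0 = g 0 := by
        simp only [hf, hg]
        rw [auxB_zero q (N + 1) (hq (N + 1)), auxB_zero q N (hq N)]
      calc ∑ n ∈ Finset.range (N + 1 + 1), f n
          = (∑ n ∈ Finset.range (N + 1), f (n + 1)) + f 0 := Finset.sum_range_succ' f (N + 1)
        _ = (∑ n ∈ Finset.range (N + 1), (g (n + 1) + (-(q ^ (N + 1)) * d) * g n
              + (q ^ (N + 1) * c * (1 - d * q)) * e n)) + g 0 := by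
            rw [Finset.sum_congr rfl pointwise, hf0g0]
        _ = ((∑ n ∈ Finset.range (N + 1), g (n + 1)) + g 0)
              + (-(q ^ (N + 1)) * d) * (∑ n ∈ Finset.range (N + 1), g n)
              + (q ^ (N + 1) * c * (1 - d * q)) * (∑ n ∈ Finset.range (N + 1), e n) := by
            rw [Finset.sum_add_distrib, Finset.sum_add_distrib, ← Finset.mul_sum, ← Finset.mul_sum]
            ring
        _ = qPoch q (d * q) (N + 1) := by
            rw [hX, hY, hE]
            have hD1 : qPoch q (d * q) (N + 1) = qPoch q (d * q) N * (1 - d * q ^ (N + 1)) := by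
              rw [qPoch_succ]; ring_nf
            have hD2 : (1 - d * q) * qPoch q (d * q * q) N = qPoch q (d * q) (N + 1) := by
              unfold qPoch
              rw [Finset.prod_range_succ']
              have e' : ∀ j ∈ Finset.range N,
                  (1 - d * q * q ^ (j + 1)) = (1 - d * q * q * q ^ j) := by
                intro j _; rw [pow_succ']; ring
              rw [Finset.prod_congr rfl e']
              ring
            linear_combination (-(1 - c * q ^ (N + 1))) * hD1 + (q ^ (N + 1) * c) * hD2

theorem stmt_10 (N : ℕ) (hN : 1 ≤ N) (q c d : ℂ) (hq : ‖q‖ < 1)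
    (hd : d ≠ 0) (hcq : ∀ k ∈ Finset.Icc 1 N, c * q ^ k ≠ 1) :
    ∑ n ∈ Finset.Icc 1 N, qBinom q N n *
        (qPoch q (c / d) n * d ^ n * (-1) ^ (n - 1) * q ^ (n * (n + 1) / 2)) /
        qPoch q (c * q) n
      = 1 - qPoch q (d * q) N / qPoch q (c * q) N := by
  have hqq : ∀ m, qPoch q q m ≠ 0 := by
    intro m
    unfold qPoch
    apply Finset.prod_ne_zero_iff.mpr
    intro k _ hcon
    have h1 : q * q ^ k = 1 := by linear_combination -hcon
    have h1' : ‖q * q ^ k‖ = 1 := by rw [h1]; simp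
    have h2 : ‖q * q ^ k‖ < 1 := by
      rw [norm_mul, norm_pow]
      calc ‖q‖ * ‖q‖ ^ k ≤ ‖q‖ * 1 := by
            apply mul_le_mul_of_nonneg_left _ (norm_nonneg q)
            exact pow_le_one₀ (norm_nonneg q) hq.le
        _ < 1 := by rwa [mul_one]
    rw [h1'] at h2
    exact lt_irrefl 1 h2
  have hcqn : ∀ n, n ≤ N → qPoch q (c * q) n ≠ 0 := by
    intro n hn
    unfold qPoch
    apply Finset.prod_ne_zero_iff.mpr
    intro k hk hcon
    have hk' : k < n := Finset.mem_range.mp hk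
    apply hcq (k + 1) (Finset.mem_Icc.mpr ⟨by omega, by omega⟩)
    rw [pow_succ']
    linear_combination -hcon
  have hcqN := hcqn N le_rfl
  have hkey := key q hqq N c d
  have hV0 : auxV q c 0 N = qPoch q (c * q) N := by
    unfold auxV qPoch
    rw [Nat.sub_zero]
    apply Finset.prod_congr rfl
    intro j _
    rw [show 0 + 1 + j = j + 1 from by omega, pow_succ']
    ring
  have h0 : auxB q N 0 * auxU q c d 0 * auxV q c 0 N = qPoch q (c * q) N := by
    rw [auxB_zero q N (hqq N), hV0]
    simp [auxU]
  rw [Finset.sum_range_succ'] at hkey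
  rw [h0] at hkey
  have hsum : ∑ n ∈ Finset.Icc 1 N, qBinom q N n *
        (qPoch q (c / d) n * d ^ n * (-1) ^ (n - 1) * q ^ (n * (n + 1) / 2)) /
        qPoch q (c * q) n
      = ∑ n ∈ Finset.range N,
          (-(auxB q N (n + 1) * auxU q c d (n + 1) * auxV q c (n + 1) N)
            / qPoch q (c * q) N) := by
    rw [← Finset.Ico_add_one_right_eq_Icc, Finset.sum_Ico_eq_sum_range,
        show N + 1 - 1 = N from by omega]
    apply Finset.sum_congr rfl
    intro i hi
    have hiN : i < N := Finset.mem_range.mp hi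
    rw [show 1 + i = i + 1 from by omega]
    have hp : (∏ k ∈ Finset.range (i + 1), (d - c * q ^ k))
        = qPoch q (c / d) (i + 1) * d ^ (i + 1) := by
      have hterm : ∀ k ∈ Finset.range (i + 1),
          d - c * q ^ k = (1 - c / d * q ^ k) * d := by
        intro k _; field_simp
      rw [Finset.prod_congr rfl hterm, Finset.prod_mul_distrib, Finset.prod_const,
          Finset.card_range]
      rfl
    have hsplit : qPoch q (c * q) N = qPoch q (c * q) (i + 1) * auxV q c (i + 1) N := by
      obtain ⟨j, hj⟩ : ∃ j, N = i + 1 + j := ⟨N - (i + 1), by omega⟩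
      rw [hj]
      unfold qPoch auxV
      rw [Finset.prod_range_add, show i + 1 + j - (i + 1) = j from by omega]
      congr 1
      apply Finset.prod_congr rfl
      intro k _
      rw [show i + 1 + 1 + k = (i + 1 + k) + 1 from by omega, pow_succ]
      ring
    have hPn := hcqn (i + 1) (by omega)
    have hV : auxV q c (i + 1) N ≠ 0 := by
      intro h0'
      apply hcqN
      rw [hsplit, h0', mul_zero]
    simp only [auxB, if_pos (show i + 1 ≤ N from by omega), auxU]
    rw [hp, hsplit, show i + 1 - 1 = i from by omega]
    field_simp
    ring
  rw [hsum]
  have hdiv : ∑ n ∈ Finset.range N,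
        (-(auxB q N (n + 1) * auxU q c d (n + 1) * auxV q c (n + 1) N)
          / qPoch q (c * q) N)
      = (∑ n ∈ Finset.range N,
          -(auxB q N (n + 1) * auxU q c d (n + 1) * auxV q c (n + 1) N))
        / qPoch q (c * q) N := (Finset.sum_div _ _ _).symm
  rw [hdiv, Finset.sum_neg_distrib]
  have hS : ∑ n ∈ Finset.range N, auxB q N (n + 1) * auxU q c d (n + 1) * auxV q c (n + 1) N
      = qPoch q (d * q) N - qPoch q (c * q) N := by linear_combination hkey
  rw [hS]
  rw [neg_div, sub_div, div_self hcqN]; ring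
end
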